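/- arXiv:1201.6035 — 3 statements merged into one kernel-verified Lean document; each statement's English description precedes it below -/
import Mathlib

section
/- Let A be invertible, b a vector, x = A⁻¹b, and suppose xᵥ = (V + Δ)b where ‖V − A⁻¹‖ ≤ ε₁‖A⁻¹‖ and ‖Δ‖ ≤ ε₂‖V‖. Then ‖xᵥ − x‖ ≤ (ε₁ κ(A) + ε₂(1+ε₁) κ(A)) ‖x‖, where κ(A) = ‖A‖‖A⁻¹‖. -/
open scoped Matrix.Norms.L2Operator
open Matrix

/-- Multiplication of a matrix by a Euclidean vector, as a map on `EuclideanSpace`. -/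
noncomputable def mv {n : ℕ} (A : Matrix (Fin n) (Fin n) ℝ)
    (v : EuclideanSpace ℝ (Fin n)) : EuclideanSpace ℝ (Fin n) :=
  (EuclideanSpace.equiv (Fin n) ℝ).symm (A *ᵥ v)

lemma mv_norm_le {n : ℕ} (A : Matrix (Fin n) (Fin n) ℝ) (v : EuclideanSpace ℝ (Fin n)) :
    ‖mv A v‖ ≤ ‖A‖ * ‖v‖ :=
  A.l2_opNorm_mulVec v

theorem stmt3 {n : ℕ} (A V Δ : Matrix (Fin n) (Fin n) ℝ) (hA : IsUnit A)
    (b : EuclideanSpace ℝ (Fin n)) (ε₁ ε₂ : ℝ) (hε₁ : 0 ≤ ε₁) (hε₂ : 0 ≤ ε₂)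
    (hV : ‖V - A⁻¹‖ ≤ ε₁ * ‖A⁻¹‖) (hΔ : ‖Δ‖ ≤ ε₂ * ‖V‖) :
    ‖mv (V + Δ) b - mv A⁻¹ b‖ ≤
      (ε₁ * (‖A‖ * ‖A⁻¹‖) + ε₂ * (1 + ε₁) * (‖A‖ * ‖A⁻¹‖)) * ‖mv A⁻¹ b‖ := by
  set x := mv A⁻¹ b with hx
  have hb : b = mv A x := by
    simp only [hx, mv]
    show b = (EuclideanSpace.equiv (Fin n) ℝ).symm (A *ᵥ (A⁻¹ *ᵥ (b : Fin n → ℝ)))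
    rw [Matrix.mulVec_mulVec, Matrix.mul_nonsing_inv A
      ((Matrix.isUnit_iff_isUnit_det A).mp hA), Matrix.one_mulVec]
    rfl
  have hbnorm : ‖b‖ ≤ ‖A‖ * ‖x‖ := by
    conv_lhs => rw [hb]
    exact mv_norm_le A x
  have hdiff : mv (V + Δ) b - x = mv (V + Δ - A⁻¹) b := by
    simp only [mv, hx]
    ext i
    simp [Matrix.sub_mulVec, Matrix.add_mulVec]
  have hVnorm : ‖V‖ ≤ (1 + ε₁) * ‖A⁻¹‖ := by
    calc ‖V‖ = ‖A⁻¹ + (V - A⁻¹)‖ := by congr 1; abel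
      _ ≤ ‖A⁻¹‖ + ‖V - A⁻¹‖ := norm_add_le _ _
      _ ≤ ‖A⁻¹‖ + ε₁ * ‖A⁻¹‖ := by linarith
      _ = (1 + ε₁) * ‖A⁻¹‖ := by ring
  have hM : ‖V + Δ - A⁻¹‖ ≤ (ε₁ + ε₂ * (1 + ε₁)) * ‖A⁻¹‖ := by
    calc ‖V + Δ - A⁻¹‖ = ‖(V - A⁻¹) + Δ‖ := by congr 1; abel
      _ ≤ ‖V - A⁻¹‖ + ‖Δ‖ := norm_add_le _ _
      _ ≤ ε₁ * ‖A⁻¹‖ + ε₂ * ‖V‖ := by linarith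
      _ ≤ ε₁ * ‖A⁻¹‖ + ε₂ * ((1 + ε₁) * ‖A⁻¹‖) := by nlinarith
      _ = (ε₁ + ε₂ * (1 + ε₁)) * ‖A⁻¹‖ := by ring
  have h1 : ‖mv (V + Δ) b - x‖ ≤ (ε₁ + ε₂ * (1 + ε₁)) * ‖A⁻¹‖ * ‖b‖ := by
    rw [hdiff]
    calc ‖mv (V + Δ - A⁻¹) b‖ ≤ ‖V + Δ - A⁻¹‖ * ‖b‖ := mv_norm_le _ _
      _ ≤ (ε₁ + ε₂ * (1 + ε₁)) * ‖A⁻¹‖ * ‖b‖ :=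
        mul_le_mul_of_nonneg_right hM (norm_nonneg _)
  have hc : (0:ℝ) ≤ (ε₁ + ε₂ * (1 + ε₁)) * ‖A⁻¹‖ := by positivity
  calc ‖mv (V + Δ) b - x‖ ≤ (ε₁ + ε₂ * (1 + ε₁)) * ‖A⁻¹‖ * ‖b‖ := h1
    _ ≤ (ε₁ + ε₂ * (1 + ε₁)) * ‖A⁻¹‖ * (‖A‖ * ‖x‖) := by
        exact mul_le_mul_of_nonneg_left hbnorm hc
    _ = (ε₁ * (‖A‖ * ‖A⁻¹‖) + ε₂ * (1 + ε₁) * (‖A‖ * ‖A⁻¹‖)) * ‖x‖ := by ring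
end

section
/- Let A be invertible, x = A⁻¹b, and let xᵥ = (V + Δ)b where ‖VA − I‖ ≤ c₁κ(A)ε and ‖Δ‖ ≤ ε‖V‖ and ‖V‖ ≤ c₂‖A⁻¹‖. Then ‖xᵥ − x‖ ≤ (c₁ + c₂)κ(A)ε‖x‖. -/
open scoped Matrix.Norms.L2Operator
open Matrix

theorem stmt4 {n : ℕ} (A V Δ : Matrix (Fin n) (Fin n) ℝ) (hA : IsUnit A)
    (b : EuclideanSpace ℝ (Fin n)) (c₁ c₂ ε : ℝ)
    (hc₁ : 0 ≤ c₁) (hc₂ : 0 ≤ c₂) (hε : 0 ≤ ε)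
    (hVA : ‖V * A - 1‖ ≤ c₁ * (‖A‖ * ‖A⁻¹‖) * ε)
    (hΔ : ‖Δ‖ ≤ ε * ‖V‖) (hVn : ‖V‖ ≤ c₂ * ‖A⁻¹‖) :
    ‖mv (V + Δ) b - mv A⁻¹ b‖ ≤ (c₁ + c₂) * (‖A‖ * ‖A⁻¹‖) * ε * ‖mv A⁻¹ b‖ := by
  have hAd : IsUnit A.det := (Matrix.isUnit_iff_isUnit_det A).mp hA
  have hAAinv : A * A⁻¹ = 1 := Matrix.mul_nonsing_inv A hAd
  set M : Matrix (Fin n) (Fin n) ℝ := (V + Δ) * A - 1 with hM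
  have hMeq : M * A⁻¹ = (V + Δ) - A⁻¹ := by
    rw [hM, Matrix.sub_mul, Matrix.mul_assoc, hAAinv, Matrix.mul_one, Matrix.one_mul]
  have key : mv (V + Δ) b - mv A⁻¹ b = mv M (mv A⁻¹ b) := by
    simp only [mv]
    have hb : ((WithLp.equiv 2 (Fin n → ℝ)).symm (A⁻¹ *ᵥ b) : Fin n → ℝ) = A⁻¹ *ᵥ b := rfl
    ext i
    simp [hb, Matrix.mulVec_mulVec, hMeq, Matrix.sub_mulVec, Pi.sub_apply]
  rw [key]
  have h1 : ‖mv M (mv A⁻¹ b)‖ ≤ ‖M‖ * ‖mv A⁻¹ b‖ :=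
    Matrix.l2_opNorm_mulVec M (mv A⁻¹ b)
  have hMnorm : ‖M‖ ≤ (c₁ + c₂) * (‖A‖ * ‖A⁻¹‖) * ε := by
    have : M = (V * A - 1) + Δ * A := by rw [hM, Matrix.add_mul]; abel
    rw [this]
    calc ‖(V * A - 1) + Δ * A‖ ≤ ‖V * A - 1‖ + ‖Δ * A‖ := norm_add_le _ _
      _ ≤ c₁ * (‖A‖ * ‖A⁻¹‖) * ε + ‖Δ‖ * ‖A‖ :=
        add_le_add hVA (Matrix.l2_opNorm_mul Δ A)
      _ ≤ c₁ * (‖A‖ * ‖A⁻¹‖) * ε + (ε * (c₂ * ‖A⁻¹‖)) * ‖A‖ := by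
        have h2 : ‖Δ‖ ≤ ε * (c₂ * ‖A⁻¹‖) :=
          hΔ.trans (by exact mul_le_mul_of_nonneg_left hVn hε)
        have := mul_le_mul_of_nonneg_right h2 (norm_nonneg A)
        linarith
      _ = (c₁ + c₂) * (‖A‖ * ‖A⁻¹‖) * ε := by ring
  calc ‖mv M (mv A⁻¹ b)‖ ≤ ‖M‖ * ‖mv A⁻¹ b‖ := h1
    _ ≤ (c₁ + c₂) * (‖A‖ * ‖A⁻¹‖) * ε * ‖mv A⁻¹ b‖ :=
      mul_le_mul_of_nonneg_right hMnorm (norm_nonneg _)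
end

section
/- (Rigal–Gaches theorem, one direction) Let A be an n×n matrix, b, y vectors with ‖A‖‖y‖ + ‖b‖ > 0, and set η := ‖Ay − b‖ / (‖A‖‖y‖ + ‖b‖). Then there exist a matrix ΔA and a vector Δb with ‖ΔA‖ ≤ η‖A‖, ‖Δb‖ ≤ η‖b‖, and (A + ΔA)y = b + Δb. -/
open scoped Matrix.Norms.L2Operator
open Matrix

lemma vecMulVec_mulVec' {n : ℕ} (u v x : Fin n → ℝ) :
    (Matrix.vecMulVec u v) *ᵥ x = (v ⬝ᵥ x) • u := by
  ext i
  simp [Matrix.vecMulVec, Matrix.mulVec, dotProduct, Finset.mul_sum, mul_assoc,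
    mul_comm, mul_left_comm]

lemma mv_vecMulVec {n : ℕ} (u v x : EuclideanSpace ℝ (Fin n)) :
    mv (Matrix.vecMulVec ((WithLp.equiv 2 _) u) ((WithLp.equiv 2 _) v)) x
      = (inner ℝ v x : ℝ) • u := by
  ext i
  have h1 : (mv (Matrix.vecMulVec ((WithLp.equiv 2 _) u) ((WithLp.equiv 2 _) v)) x) i
      = ((Matrix.vecMulVec ((WithLp.equiv 2 _) u) ((WithLp.equiv 2 _) v)) *ᵥ
          ((WithLp.equiv 2 _) x)) i := rfl
  rw [h1, vecMulVec_mulVec']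
  have h2 : (inner ℝ v x : ℝ) = ((WithLp.equiv 2 _) v) ⬝ᵥ ((WithLp.equiv 2 _) x) := by
    rw [PiLp.inner_apply]
    simp [dotProduct, mul_comm]
  rw [h2]
  rfl

lemma norm_vecMulVec_le {n : ℕ} (u v : EuclideanSpace ℝ (Fin n)) :
    ‖Matrix.vecMulVec ((WithLp.equiv 2 _) u) ((WithLp.equiv 2 _) v)‖ ≤ ‖u‖ * ‖v‖ := by
  rw [Matrix.l2_opNorm_def]
  apply ContinuousLinearMap.opNorm_le_bound _ (by positivity)
  intro x
  show ‖mv (Matrix.vecMulVec ((WithLp.equiv 2 _) u) ((WithLp.equiv 2 _) v)) x‖ ≤ ‖u‖ * ‖v‖ * ‖x‖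
  rw [mv_vecMulVec, norm_smul]
  calc ‖(inner ℝ v x : ℝ)‖ * ‖u‖ ≤ (‖v‖ * ‖x‖) * ‖u‖ := by
        gcongr; exact norm_inner_le_norm v x
    _ = ‖u‖ * ‖v‖ * ‖x‖ := by ring

theorem stmt6 {n : ℕ} (A : Matrix (Fin n) (Fin n) ℝ)
    (b y : EuclideanSpace ℝ (Fin n)) (hpos : 0 < ‖A‖ * ‖y‖ + ‖b‖) :
    ∃ (ΔA : Matrix (Fin n) (Fin n) ℝ) (Δb : EuclideanSpace ℝ (Fin n)),
      ‖ΔA‖ ≤ (‖mv A y - b‖ / (‖A‖ * ‖y‖ + ‖b‖)) * ‖A‖ ∧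
      ‖Δb‖ ≤ (‖mv A y - b‖ / (‖A‖ * ‖y‖ + ‖b‖)) * ‖b‖ ∧
      mv (A + ΔA) y = b + Δb := by
  set den := ‖A‖ * ‖y‖ + ‖b‖ with hden
  set r : EuclideanSpace ℝ (Fin n) := mv A y - b with hr
  by_cases hy : y = 0
  · refine ⟨0, -b, ?_, ?_, ?_⟩
    · simpa using by positivity
    · have hAy : mv A y = 0 := by
        simp [mv, hy]
      have : ‖mv A y - b‖ = ‖b‖ := by rw [hAy]; simp
      rw [norm_neg, this]
      have hd : den = ‖b‖ := by rw [hden, hy]; simp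
      rw [hd]
      rcases eq_or_lt_of_le (norm_nonneg b) with h | h
      · simp [← h]
      · rw [div_self h.ne', one_mul]
    · have hAy : mv (A + 0) y = 0 := by
        simp [mv, hy]
      rw [hAy]; simp
  · have hyn : (0:ℝ) < ‖y‖ := norm_pos_iff.mpr hy
    set c : ℝ := ‖A‖ / (den * ‖y‖) with hc
    refine ⟨(-c) • Matrix.vecMulVec ((WithLp.equiv 2 _) r) ((WithLp.equiv 2 _) y),
      (‖b‖ / den) • r, ?_, ?_, ?_⟩
    · rw [norm_smul]
      calc ‖-c‖ * ‖Matrix.vecMulVec ((WithLp.equiv 2 _) r) ((WithLp.equiv 2 _) y)‖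
          ≤ ‖-c‖ * (‖r‖ * ‖y‖) := by gcongr; exact norm_vecMulVec_le r y
        _ = (‖r‖ / den) * ‖A‖ := by
            rw [norm_neg, Real.norm_eq_abs, hc, abs_of_nonneg (by positivity)]
            field_simp
    · rw [norm_smul, Real.norm_eq_abs, abs_of_nonneg (by positivity)]
      rw [div_mul_eq_mul_div, div_mul_eq_mul_div, mul_comm]
    · have hadd : ∀ (M N : Matrix (Fin n) (Fin n) ℝ) (x : EuclideanSpace ℝ (Fin n)),
          mv (M + N) x = mv M x + mv N x := by
        intro M N x
        simp [mv, Matrix.add_mulVec]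
      have hsmul : ∀ (t : ℝ) (M : Matrix (Fin n) (Fin n) ℝ) (x : EuclideanSpace ℝ (Fin n)),
          mv (t • M) x = t • mv M x := by
        intro t M x
        simp [mv, Matrix.smul_mulVec]
      rw [hadd, hsmul, mv_vecMulVec]
      have hinner : (inner ℝ y y : ℝ) = ‖y‖ ^ 2 := real_inner_self_eq_norm_sq y
      have hAy : mv A y = b + r := by rw [hr]; abel
      rw [hAy, hinner, smul_smul]
      have : -c * ‖y‖ ^ 2 = ‖b‖ / den - 1 := by
        rw [hc]
        field_simp
        ring
      rw [this]
      have : b + r + (‖b‖ / den - 1) • r = b + (‖b‖/den) • r := by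
        rw [sub_smul, one_smul]; abel
      rw [this]
end
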